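/- Let A and B be n×n positive definite complex matrices. Then with the linear path C(s) = (1−s)A + sB, the relative entropy satisfies S(A‖B) = Tr(A − B) + Tr((B − A)·log B) − ∫₀¹ Tr((B − A)·log((1−s)A + sB)) ds. -/

import Mathlib

set_option maxHeartbeats 1000000


open Matrix MeasureTheory
open scoped ComplexOrder

/-- Matrix logarithm on the support: apply `Real.log` (which is `0` at `0`) to the
eigenvalues of a Hermitian matrix via functional calculus; junk value `0` otherwise. -/
noncomputable def mlog {n : Type*} [Fintype n] [DecidableEq n] (A : Matrix n n ℂ) :
    Matrix n n ℂ :=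
  if hA : A.IsHermitian then hA.cfc Real.log else 0

/-- Quantum relative entropy `S(A‖B) = Tr A (log A - log B)`. -/
noncomputable def qRelEnt {n : Type*} [Fintype n] [DecidableEq n] (A B : Matrix n n ℂ) : ℝ :=
  ((A * (mlog A - mlog B)).trace).re

/-- Trace norm `‖X‖₁ = Tr √(Xᴴ X)`. -/
noncomputable def traceNorm {n : Type*} [Fintype n] [DecidableEq n] (X : Matrix n n ℂ) : ℝ :=
  ((((Matrix.posSemidef_conjTranspose_mul_self X).1.eigenvectorUnitary : Matrix n n ℂ) * diagonal (Complex.ofReal ∘ Real.sqrt ∘ (Matrix.posSemidef_conjTranspose_mul_self X).1.eigenvalues) * (star (Matrix.posSemidef_conjTranspose_mul_self X).1.eigenvectorUnitary : Matrix n n ℂ)).trace).re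

/-- Smallest eigenvalue of a Hermitian matrix (junk value `0` otherwise). -/
noncomputable def lamMin {n : Type*} [Fintype n] [DecidableEq n] (A : Matrix n n ℂ) : ℝ :=
  if hA : A.IsHermitian then ⨅ i, hA.eigenvalues i else 0

/-- Largest eigenvalue of a Hermitian matrix (junk value `0` otherwise). -/
noncomputable def lamMax {n : Type*} [Fintype n] [DecidableEq n] (A : Matrix n n ℂ) : ℝ :=
  if hA : A.IsHermitian then ⨆ i, hA.eigenvalues i else 0

/-- Operator norm: largest eigenvalue of `√(Xᴴ X)` (largest singular value). -/
noncomputable def opNorm {n : Type*} [Fintype n] [DecidableEq n] (X : Matrix n n ℂ) : ℝ :=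
  ⨆ i, (show (((Matrix.posSemidef_conjTranspose_mul_self X).1.eigenvectorUnitary : Matrix n n ℂ) * diagonal (Complex.ofReal ∘ Real.sqrt ∘ (Matrix.posSemidef_conjTranspose_mul_self X).1.eigenvalues) * (star (Matrix.posSemidef_conjTranspose_mul_self X).1.eigenvectorUnitary : Matrix n n ℂ)).IsHermitian by
    rw [Matrix.star_eq_conjTranspose]
    exact Matrix.isHermitian_mul_mul_conjTranspose _ (Matrix.isHermitian_diagonal_of_self_adjoint _
      (by ext i; simp))).eigenvalues i


namespace RelEntAux
open Polynomial Filter Topology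

variable {n : Type*} [Fintype n] [DecidableEq n] {M : Matrix n n ℂ}

lemma star_mul_self_eigU (hM : M.IsHermitian) :
    star (hM.eigenvectorUnitary : Matrix n n ℂ) * (hM.eigenvectorUnitary : Matrix n n ℂ) = 1 :=
  Unitary.star_mul_self_of_mem (SetLike.coe_mem _)

lemma mul_star_self_eigU (hM : M.IsHermitian) :
    (hM.eigenvectorUnitary : Matrix n n ℂ) * star (hM.eigenvectorUnitary : Matrix n n ℂ) = 1 :=
  Unitary.mul_star_self_of_mem (SetLike.coe_mem _)

lemma cfc_mul (hM : M.IsHermitian) (f g : ℝ → ℝ) :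
    hM.cfc f * hM.cfc g = hM.cfc (fun x => f x * g x) := by
  simp only [Matrix.IsHermitian.cfc, Unitary.conjStarAlgAut_apply, Unitary.coe_star]
  have h : ∀ {a b c d e f : Matrix n n ℂ}, (a*b*c)*(d*e*f) = a*(b*(c*d)*e)*f := by
    intros; simp only [mul_assoc]
  rw [h, star_mul_self_eigU, mul_one, Matrix.diagonal_mul_diagonal]
  have : (fun i => (RCLike.ofReal ∘ f ∘ hM.eigenvalues) i * (RCLike.ofReal ∘ g ∘ hM.eigenvalues) i : n → ℂ)
      = RCLike.ofReal ∘ (fun x => f x * g x) ∘ hM.eigenvalues := by ext i; simp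
  rw [this]

lemma trace_cfc (hM : M.IsHermitian) (f : ℝ → ℝ) :
    (hM.cfc f).trace = ∑ i, (f (hM.eigenvalues i) : ℂ) := by
  simp only [Matrix.IsHermitian.cfc, Unitary.conjStarAlgAut_apply, Unitary.coe_star]
  rw [mul_assoc, Matrix.trace_mul_comm, mul_assoc, star_mul_self_eigU, mul_one,
    Matrix.trace_diagonal]
  simp

lemma cfc_sub (hM : M.IsHermitian) (f g : ℝ → ℝ) :
    hM.cfc f - hM.cfc g = hM.cfc (fun x => f x - g x) := by
  simp only [Matrix.IsHermitian.cfc, Unitary.conjStarAlgAut_apply, Unitary.coe_star]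
  rw [← Matrix.sub_mul, ← Matrix.mul_sub, Matrix.diagonal_sub]
  have : (fun i => (RCLike.ofReal ∘ f ∘ hM.eigenvalues) i - (RCLike.ofReal ∘ g ∘ hM.eigenvalues) i : n → ℂ)
      = RCLike.ofReal ∘ (fun x => f x - g x) ∘ hM.eigenvalues := by ext i; simp
  rw [this]

lemma cfc_add (hM : M.IsHermitian) (f g : ℝ → ℝ) :
    hM.cfc f + hM.cfc g = hM.cfc (fun x => f x + g x) := by
  simp only [Matrix.IsHermitian.cfc, Unitary.conjStarAlgAut_apply, Unitary.coe_star]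
  rw [← Matrix.add_mul, ← Matrix.mul_add, Matrix.diagonal_add]
  have : (fun i => (RCLike.ofReal ∘ f ∘ hM.eigenvalues) i + (RCLike.ofReal ∘ g ∘ hM.eigenvalues) i : n → ℂ)
      = RCLike.ofReal ∘ (fun x => f x + g x) ∘ hM.eigenvalues := by ext i; simp
  rw [this]

lemma cfc_const_mul (hM : M.IsHermitian) (r : ℝ) (f : ℝ → ℝ) :
    hM.cfc (fun x => r * f x) = r • hM.cfc f := by
  simp only [Matrix.IsHermitian.cfc, Unitary.conjStarAlgAut_apply, Unitary.coe_star]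
  have : (RCLike.ofReal ∘ (fun x => r * f x) ∘ hM.eigenvalues : n → ℂ)
      = r • (RCLike.ofReal ∘ f ∘ hM.eigenvalues) := by
    ext i; simp [Complex.real_smul]
  rw [this, Matrix.diagonal_smul, mul_smul_comm, smul_mul_assoc]

lemma cfc_one (hM : M.IsHermitian) : hM.cfc (fun _ => 1) = 1 := by
  simp only [Matrix.IsHermitian.cfc, Unitary.conjStarAlgAut_apply, Unitary.coe_star]
  have : Matrix.diagonal (RCLike.ofReal ∘ (fun _ : ℝ => (1:ℝ)) ∘ hM.eigenvalues)
      = (1 : Matrix n n ℂ) := by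
    simp [Function.comp_def]
  rw [this, mul_one, mul_star_self_eigU]

lemma cfc_id (hM : M.IsHermitian) : hM.cfc (fun x => x) = M := by
  simp only [Matrix.IsHermitian.cfc, Unitary.conjStarAlgAut_apply, Unitary.coe_star]
  exact (hM.spectral_theorem).symm

lemma cfc_pow (hM : M.IsHermitian) (k : ℕ) : hM.cfc (fun x => x ^ k) = M ^ k := by
  induction k with
  | zero => simpa using cfc_one hM
  | succ k ih =>
      have : (fun x : ℝ => x ^ (k+1)) = fun x => x ^ k * x := by ext x; ring
      rw [this, ← cfc_mul hM, ih, cfc_id hM, pow_succ]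

lemma cfc_polynomial (hM : M.IsHermitian) (p : ℝ[X]) :
    hM.cfc (fun x => p.eval x) = Polynomial.aeval M p := by
  induction p using Polynomial.induction_on' with
  | add p q hp hq =>
      have : (fun x : ℝ => (p+q).eval x) = fun x => p.eval x + q.eval x := by
        ext x; simp
      rw [this, ← cfc_add hM, hp, hq, map_add]
  | monomial k a =>
      have : (fun x : ℝ => (Polynomial.monomial k a).eval x) = fun x => a * x ^ k := by
        ext x; simp
      rw [this, cfc_const_mul hM, cfc_pow hM, Polynomial.aeval_monomial, ← Algebra.smul_def]


/-! ### Trace bounds for `cfc` -/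

lemma re_trace_cfc (hM : M.IsHermitian) (g : ℝ → ℝ) :
    ((hM.cfc g).trace).re = ∑ i, g (hM.eigenvalues i) := by
  rw [trace_cfc hM g]
  simp [Complex.re_sum]

lemma unit_entry_norm_le {v : EuclideanSpace ℂ n} (hv : ‖v‖ = 1) (a : n) : ‖v a‖ ≤ 1 := by
  have h := EuclideanSpace.norm_eq v
  rw [hv] at h
  have h0 : (0:ℝ) ≤ ∑ i, ‖v i‖^2 := by positivity
  have h2 : ∑ i, ‖v i‖^2 = 1 := by
    have h4 := Real.sq_sqrt h0
    rw [← h] at h4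
    simpa using h4.symm
  have h3 : ‖v a‖^2 ≤ 1 := by
    rw [← h2]
    exact Finset.single_le_sum (f := fun i => ‖v i‖^2) (fun i _ => by positivity)
      (Finset.mem_univ a)
  nlinarith [norm_nonneg (v a)]

lemma entry_eigU_norm_le (hM : M.IsHermitian) (a i : n) :
    ‖(hM.eigenvectorUnitary : Matrix n n ℂ) a i‖ ≤ 1 := by
  rw [Matrix.IsHermitian.eigenvectorUnitary_apply]
  exact unit_entry_norm_le (hM.eigenvectorBasis.orthonormal.1 i) a

lemma abs_re_trace_mul_cfc_le (hM : M.IsHermitian) (X : Matrix n n ℂ) (g : ℝ → ℝ) {δ : ℝ}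
    (hδ : ∀ i, |g (hM.eigenvalues i)| ≤ δ) :
    |((X * hM.cfc g).trace).re| ≤ (Fintype.card n) * ((∑ a, ∑ b, ‖X a b‖) * δ) := by
  classical
  have hU := hM.eigenvectorUnitary
  have htr : (X * hM.cfc g).trace =
      ((star (hM.eigenvectorUnitary : Matrix n n ℂ) * X * (hM.eigenvectorUnitary : Matrix n n ℂ))
        * Matrix.diagonal (RCLike.ofReal ∘ g ∘ hM.eigenvalues)).trace := by
    simp only [Matrix.IsHermitian.cfc, Unitary.conjStarAlgAut_apply, Unitary.coe_star]
    rw [← mul_assoc, ← mul_assoc, Matrix.trace_mul_comm, ← mul_assoc, ← mul_assoc]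
  set U : Matrix n n ℂ := (hM.eigenvectorUnitary : Matrix n n ℂ) with hUdef
  set d : n → ℂ := RCLike.ofReal ∘ g ∘ hM.eigenvalues with hd
  have hdiag : ((star U * X * U) * Matrix.diagonal d).trace
      = ∑ i, (star U * X * U) i i * d i := by
    rw [Matrix.trace]
    congr 1
    ext i
    rw [Matrix.diag_apply, Matrix.mul_diagonal]
  have hentry : ∀ i, ‖(star U * X * U) i i‖ ≤ ∑ a, ∑ b, ‖X a b‖ := by
    intro i
    have h : (star U * X * U) i i = ∑ a, ∑ b, (star U) i a * X a b * U b i := by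
      simp only [Matrix.mul_apply, Finset.sum_mul, Matrix.star_apply]
      rw [Finset.sum_comm]
    rw [h]
    refine (norm_sum_le _ _).trans (Finset.sum_le_sum fun a _ => ?_)
    refine (norm_sum_le _ _).trans (Finset.sum_le_sum fun b _ => ?_)
    rw [norm_mul, norm_mul]
    have hUa : ‖(star U) i a‖ ≤ 1 := by
      rw [Matrix.star_apply, norm_star]
      exact entry_eigU_norm_le hM a i
    have hUb : ‖U b i‖ ≤ 1 := entry_eigU_norm_le hM b i
    calc ‖(star U) i a‖ * ‖X a b‖ * ‖U b i‖
        ≤ 1 * ‖X a b‖ * 1 := by gcongr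
      _ = ‖X a b‖ := by ring
  rw [htr, hdiag]
  have hmain : |(∑ i, (star U * X * U) i i * d i).re| ≤ ∑ _i : n, (∑ a, ∑ b, ‖X a b‖) * δ := by
    rw [Complex.re_sum]
    refine (Finset.abs_sum_le_sum_abs _ _).trans (Finset.sum_le_sum fun i _ => ?_)
    have h1 : |((star U * X * U) i i * d i).re| ≤ ‖(star U * X * U) i i * d i‖ := by
      simpa using Complex.abs_re_le_norm ((star U * X * U) i i * d i)
    refine h1.trans ?_
    rw [norm_mul]
    have hdi : ‖d i‖ ≤ δ := by
      simp only [hd, Function.comp_apply, RCLike.norm_ofReal]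
      exact hδ i
    exact mul_le_mul (hentry i) hdi (norm_nonneg _) (by positivity)
  refine hmain.trans ?_
  rw [Finset.sum_const, Finset.card_univ]
  simp [nsmul_eq_mul]


/-! ### Quadratic forms and eigenvalue bounds -/

/-- Real quadratic form of a complex matrix. -/
noncomputable def qf (A : Matrix n n ℂ) (v : n → ℂ) : ℝ := (star v ⬝ᵥ (A *ᵥ v)).re

omit [DecidableEq n] in
lemma qf_continuous (A : Matrix n n ℂ) :
    Continuous fun v : EuclideanSpace ℂ n => qf A (⇑v) := by
  have hcoord : ∀ a : n, Continuous fun v : EuclideanSpace ℂ n => (v : n → ℂ) a := by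
    intro a
    exact (continuous_apply a).comp (PiLp.continuous_ofLp 2 fun _ : n => ℂ)
  apply Complex.continuous_re.comp
  simp only [dotProduct, Matrix.mulVec]
  apply continuous_finset_sum
  intro a _
  apply Continuous.mul
  · exact Complex.continuous_conj.comp (hcoord a)
  · exact continuous_finset_sum _ fun b _ => continuous_const.mul (hcoord b)

omit [DecidableEq n] in
lemma qf_le_sum (A : Matrix n n ℂ) {v : n → ℂ} (hv : ∀ a, ‖v a‖ ≤ 1) :
    qf A v ≤ ∑ a, ∑ b, ‖A a b‖ := by
  have h1 : qf A v ≤ ‖star v ⬝ᵥ (A *ᵥ v)‖ := Complex.re_le_norm _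
  refine h1.trans ?_
  simp only [dotProduct, Matrix.mulVec]
  refine (norm_sum_le _ _).trans (Finset.sum_le_sum fun a _ => ?_)
  rw [norm_mul]
  have h2 : ‖(star v) a‖ ≤ 1 := by
    simpa [Pi.star_apply, norm_star] using hv a
  refine (mul_le_mul h2 (norm_sum_le _ _) (norm_nonneg _) zero_le_one).trans ?_
  rw [one_mul]
  refine Finset.sum_le_sum fun b _ => ?_
  rw [norm_mul]
  exact (mul_le_mul_of_nonneg_left (hv b) (norm_nonneg _)).trans (by simp)

omit [DecidableEq n] in
lemma exists_qf_lower [Nonempty n] {A : Matrix n n ℂ} (hA : A.PosDef) :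
    ∃ m : ℝ, 0 < m ∧ ∀ v : EuclideanSpace ℂ n, ‖v‖ = 1 → m ≤ qf A (⇑v) := by
  have hsph : (Metric.sphere (0 : EuclideanSpace ℂ n) 1).Nonempty :=
    NormedSpace.sphere_nonempty.mpr zero_le_one
  obtain ⟨v₀, hv₀, hmin⟩ := (isCompact_sphere (0 : EuclideanSpace ℂ n) 1).exists_isMinOn hsph
    ((qf_continuous A).continuousOn)
  rw [isMinOn_iff] at hmin
  refine ⟨qf A (⇑v₀), ?_, fun v hv => hmin v (by simpa [mem_sphere_zero_iff_norm] using hv)⟩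
  have hv₀ne : (⇑v₀ : n → ℂ) ≠ 0 := by
    have : v₀ ≠ 0 := by
      intro h
      rw [mem_sphere_zero_iff_norm, h, norm_zero] at hv₀
      norm_num at hv₀
    intro hc
    exact this (by ext i; exact congrFun hc i)
  exact hA.re_dotProduct_pos hv₀ne

lemma isHermitian_comb (hA : M.IsHermitian) {B : Matrix n n ℂ} (hB : B.IsHermitian) (s : ℝ) :
    ((1 - s) • M + s • B).IsHermitian := by
  have h1 : ((1 - s) • M).IsHermitian := by
    unfold Matrix.IsHermitian at *
    rw [Matrix.conjTranspose_smul, star_trivial, hA]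
  have h2 : (s • B).IsHermitian := by
    unfold Matrix.IsHermitian at *
    rw [Matrix.conjTranspose_smul, star_trivial, hB]
  exact h1.add h2

omit [DecidableEq n] in
lemma qf_comb (A B : Matrix n n ℂ) (s : ℝ) (v : n → ℂ) :
    qf ((1 - s) • A + s • B) v = (1 - s) * qf A v + s * qf B v := by
  unfold qf
  rw [Matrix.add_mulVec, Matrix.smul_mulVec, Matrix.smul_mulVec,
    dotProduct_add, dotProduct_smul, dotProduct_smul]
  simp [Complex.real_smul, Complex.re_ofReal_mul]

lemma eig_eq_qf (hM : M.IsHermitian) (i : n) :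
    hM.eigenvalues i = qf M (⇑(hM.eigenvectorBasis i)) := by
  rw [hM.eigenvalues_eq]
  rfl


lemma comb_lower {m L0 s qA qB : ℝ} (hm : 0 < m) (hmL : m ≤ L0)
    (h1 : m ≤ qA) (h2 : qA ≤ L0) (h3 : m ≤ qB) (h4 : qB ≤ L0)
    (hs : -(m/(2*(L0+m))) < s) (hs' : s < 1 + m/(2*(L0+m))) :
    m/2 ≤ (1-s)*qA + s*qB ∧ (1-s)*qA + s*qB ≤ 2*L0 := by
  have hL0 : 0 < L0 := lt_of_lt_of_le hm hmL
  have hd : 0 < 2*(L0+m) := by linarith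
  have hεL : (m/(2*(L0+m))) * L0 ≤ m/2 := by
    rw [div_mul_eq_mul_div, div_le_div_iff₀ hd (by norm_num)]
    nlinarith
  have hε1 : m/(2*(L0+m)) ≤ 1 := by
    rw [div_le_one hd]; nlinarith
  constructor
  · rcases le_or_gt 0 s with h | h
    · rcases le_or_gt s 1 with h' | h'
      · nlinarith
      · nlinarith [mul_nonneg (by linarith : (0:ℝ) ≤ s - 1) (by linarith : (0:ℝ) ≤ qB - m),
          mul_nonneg (by linarith : (0:ℝ) ≤ s - 1) (by linarith : (0:ℝ) ≤ L0 - qA)]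
    · nlinarith [mul_nonneg (by linarith : (0:ℝ) ≤ -s) (by linarith : (0:ℝ) ≤ qA),
        mul_nonneg (by linarith : (0:ℝ) ≤ -s) (by linarith : (0:ℝ) ≤ L0 - qB)]
  · rcases le_or_gt 0 s with h | h
    · rcases le_or_gt s 1 with h' | h'
      · nlinarith [mul_nonneg h (by linarith : (0:ℝ) ≤ L0 - qB),
          mul_nonneg (by linarith : (0:ℝ) ≤ 1 - s) (by linarith : (0:ℝ) ≤ L0 - qA)]
      · nlinarith [mul_nonneg (by linarith : (0:ℝ) ≤ s - 1) (by linarith : (0:ℝ) ≤ qA),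
          mul_nonneg (by linarith : (0:ℝ) ≤ s - 1) (by linarith : (0:ℝ) ≤ L0 - qB)]
    · nlinarith [mul_nonneg (by linarith : (0:ℝ) ≤ -s) (by linarith : (0:ℝ) ≤ qB),
        mul_nonneg (by linarith : (0:ℝ) ≤ -s) (by linarith : (0:ℝ) ≤ L0 - qA)]

lemma eigenvalues_comb_mem [Nonempty n] {A B : Matrix n n ℂ} (hA : A.PosDef) (hB : B.PosDef) :
    ∃ c L ε : ℝ, 0 < c ∧ 0 < ε ∧ c ≤ L ∧ ∀ s ∈ Set.Ioo (-ε) (1+ε), ∀ i : n,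
      (isHermitian_comb hA.1 hB.1 s).eigenvalues i ∈ Set.Icc c L := by
  obtain ⟨mA, hmA, hAlow⟩ := exists_qf_lower hA
  obtain ⟨mB, hmB, hBlow⟩ := exists_qf_lower hB
  set SA := ∑ a, ∑ b, ‖A a b‖ with hSA
  set SB := ∑ a, ∑ b, ‖B a b‖ with hSB
  set L0 := SA + SB with hL0def
  set m := min mA mB with hmdef
  have hm : 0 < m := lt_min hmA hmB
  have hqA : ∀ v : EuclideanSpace ℂ n, ‖v‖ = 1 → m ≤ qf A ⇑v ∧ qf A ⇑v ≤ L0 := by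
    intro v hv
    refine ⟨(min_le_left _ _).trans (hAlow v hv), ?_⟩
    have := qf_le_sum A (v := ⇑v) (fun a => unit_entry_norm_le hv a)
    have hSB0 : 0 ≤ SB := by positivity
    linarith
  have hqB : ∀ v : EuclideanSpace ℂ n, ‖v‖ = 1 → m ≤ qf B ⇑v ∧ qf B ⇑v ≤ L0 := by
    intro v hv
    refine ⟨(min_le_right _ _).trans (hBlow v hv), ?_⟩
    have := qf_le_sum B (v := ⇑v) (fun a => unit_entry_norm_le hv a)
    have hSA0 : 0 ≤ SA := by positivity
    linarith
  have hmL : m ≤ L0 := by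
    have i₀ : n := Classical.arbitrary n
    have hv := hA.1.eigenvectorBasis.orthonormal.1 i₀
    have h := hqA (hA.1.eigenvectorBasis i₀) hv
    linarith [h.1, h.2]
  refine ⟨m/2, 2*L0, m/(2*(L0+m)), by positivity, by positivity, by nlinarith, ?_⟩
  rintro s ⟨hs1, hs2⟩ i
  have hherm := isHermitian_comb hA.1 hB.1 s
  have hv : ‖(isHermitian_comb hA.1 hB.1 s).eigenvectorBasis i‖ = 1 :=
    (isHermitian_comb hA.1 hB.1 s).eigenvectorBasis.orthonormal.1 i
  have heq : (isHermitian_comb hA.1 hB.1 s).eigenvalues i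
      = (1-s) * qf A ⇑((isHermitian_comb hA.1 hB.1 s).eigenvectorBasis i)
        + s * qf B ⇑((isHermitian_comb hA.1 hB.1 s).eigenvectorBasis i) := by
    rw [eig_eq_qf, qf_comb]
  obtain ⟨ha1, ha2⟩ := hqA _ hv
  obtain ⟨hb1, hb2⟩ := hqB _ hv
  have := comb_lower hm hmL ha1 ha2 hb1 hb2 hs1 hs2
  rw [heq]
  exact ⟨this.1, this.2⟩


/-! ### Derivative machinery -/

section Deriv

attribute [local instance] Matrix.linftyOpNormedAddCommGroup Matrix.linftyOpNormedRing
  Matrix.linftyOpNormedAlgebra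

variable (A B : Matrix n n ℂ)

lemma hasDerivAt_comb (s : ℝ) :
    HasDerivAt (fun s : ℝ => (1 - s) • A + s • B) (B - A) s := by
  have h1 : HasDerivAt (fun s : ℝ => 1 - s) (-1) s := (hasDerivAt_id s).const_sub 1
  have h2 := h1.smul_const A
  have h3 := (hasDerivAt_id s).smul_const B
  have h4 := h2.add h3
  simp only [neg_smul, one_smul] at h4
  refine h4.congr_deriv ?_
  abel

lemma hasDerivAt_comb_pow (k : ℕ) (s : ℝ) :
    HasDerivAt (fun s : ℝ => ((1 - s) • A + s • B) ^ k)
      (∑ j ∈ Finset.range k, ((1 - s) • A + s • B) ^ j * (B - A) *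
        ((1 - s) • A + s • B) ^ (k - 1 - j)) s := by
  induction k with
  | zero =>
      simp only [pow_zero, Finset.range_zero, Finset.sum_empty]
      exact hasDerivAt_const s (1 : Matrix n n ℂ)
  | succ k ih =>
      have h := ih.mul (hasDerivAt_comb A B s)
      have hfun : (fun s : ℝ => ((1 - s) • A + s • B) ^ (k+1))
          = fun s : ℝ => ((1 - s) • A + s • B) ^ k * ((1 - s) • A + s • B) := by
        funext s; rw [pow_succ]
      rw [hfun]
      refine h.congr_deriv ?_
      set M := (1 - s) • A + s • B with hM
      have key : ∀ j ∈ Finset.range k,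
          M ^ j * (B - A) * M ^ (k + 1 - 1 - j) = (M ^ j * (B - A) * M ^ (k - 1 - j)) * M := by
        intro j hj
        rw [Finset.mem_range] at hj
        rw [show k + 1 - 1 - j = k - 1 - j + 1 by omega, pow_succ]
        simp [mul_assoc]
      rw [Finset.sum_range_succ, Finset.sum_congr rfl key, ← Finset.sum_mul]
      simp

/-- trace-re composed with left multiplication, as a continuous linear map. -/
noncomputable def treL (W : Matrix n n ℂ) : Matrix n n ℂ →L[ℝ] ℝ :=
  LinearMap.toContinuousLinearMap
    { toFun := fun X => ((W * X).trace).re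
      map_add' := fun X Y => by simp [Matrix.mul_add]
      map_smul' := fun r X => by
        simp [mul_smul_comm, Matrix.trace_smul, Complex.real_smul, Complex.re_ofReal_mul] }

@[simp] lemma treL_apply (W X : Matrix n n ℂ) : treL W X = ((W * X).trace).re := rfl

lemma trace_re_cyclic (M H : Matrix n n ℂ) (k j : ℕ) (hj : j < k) :
    ((M ^ j * H * M ^ (k - 1 - j)).trace) = ((H * M ^ (k-1)).trace) := by
  rw [Matrix.trace_mul_comm (M ^ j * H) (M ^ (k - 1 - j)), ← mul_assoc, ← pow_add]
  have h1 : k - 1 - j + j = k - 1 := by omega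
  rw [h1, Matrix.trace_mul_comm]

lemma hasDerivAt_trace_aeval (p : Polynomial ℝ) (s : ℝ) :
    HasDerivAt (fun s : ℝ => (((Polynomial.aeval ((1 - s) • A + s • B)) p).trace).re)
      ((((B - A) * (Polynomial.aeval ((1 - s) • A + s • B)) (Polynomial.derivative p)).trace).re)
      s := by
  induction p using Polynomial.induction_on' with
  | add p q hp hq =>
      have hfun : (fun s : ℝ => (((Polynomial.aeval ((1 - s) • A + s • B)) (p + q)).trace).re)
          = fun s : ℝ => (((Polynomial.aeval ((1 - s) • A + s • B)) p).trace).re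
              + (((Polynomial.aeval ((1 - s) • A + s • B)) q).trace).re := by
        funext s; simp [Matrix.trace_add]
      rw [hfun]
      have h := hp.add hq
      refine h.congr_deriv ?_
      simp [Matrix.mul_add, Matrix.trace_add]
  | monomial k a =>
      have hfun : (fun s : ℝ =>
            (((Polynomial.aeval ((1 - s) • A + s • B)) (Polynomial.monomial k a)).trace).re)
          = fun s : ℝ => a * ((((1 - s) • A + s • B) ^ k).trace).re := by
        funext s
        rw [Polynomial.aeval_monomial, ← Algebra.smul_def, Matrix.trace_smul]
        simp [Complex.real_smul, Complex.re_ofReal_mul]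
      rw [hfun]
      have h := ((treL (1 : Matrix n n ℂ)).hasFDerivAt.comp_hasDerivAt s
        (hasDerivAt_comb_pow A B k s)).const_mul a
      have hder : (((B - A) *
            (Polynomial.aeval ((1 - s) • A + s • B)) (Polynomial.derivative
              (Polynomial.monomial k a))).trace).re
          = a * (treL (1 : Matrix n n ℂ)) (∑ j ∈ Finset.range k,
              ((1 - s) • A + s • B) ^ j * (B - A) * ((1 - s) • A + s • B) ^ (k - 1 - j)) := by
        set M := (1 - s) • A + s • B with hMdef
        rw [Polynomial.derivative_monomial, Polynomial.aeval_monomial, ← Algebra.smul_def,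
          mul_smul_comm, Matrix.trace_smul]
        rw [treL_apply, one_mul, Matrix.trace_sum, Complex.re_sum]
        have hterm : ∀ j ∈ Finset.range k,
            ((M ^ j * (B - A) * M ^ (k - 1 - j)).trace).re
              = (((B - A) * M ^ (k-1)).trace).re := by
          intro j hj
          rw [trace_re_cyclic M (B - A) k j (Finset.mem_range.mp hj)]
        rw [Finset.sum_congr rfl hterm, Finset.sum_const, Finset.card_range]
        simp only [Complex.real_smul, Complex.re_ofReal_mul, nsmul_eq_mul]
        ring
      rw [hder]
      exact h.congr_of_eventuallyEq (Filter.Eventually.of_forall fun y => by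
        simp [Function.comp, one_mul])


lemma continuous_trace_mul_aeval (q : Polynomial ℝ) :
    Continuous fun s : ℝ =>
      (((B - A) * (Polynomial.aeval ((1 - s) • A + s • B)) q).trace).re := by
  have hMc : Continuous fun s : ℝ => (1 - s) • A + s • B :=
    ((continuous_const.sub continuous_id).smul continuous_const).add
      (continuous_id.smul continuous_const)
  have h := (treL (B - A)).continuous.comp ((q.continuous_aeval).comp hMc)
  exact h

end Deriv


/-! ### Polynomial approximation with derivative control -/

noncomputable def pint (q : Polynomial ℝ) : Polynomial ℝ :=
  q.sum fun k a => Polynomial.C (a / (k+1)) * Polynomial.X ^ (k+1)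

lemma derivative_pint (q : Polynomial ℝ) : Polynomial.derivative (pint q) = q := by
  rw [pint, Polynomial.sum_def, map_sum]
  have h : ∀ k ∈ q.support, Polynomial.derivative
      (Polynomial.C (q.coeff k / (k+1)) * Polynomial.X ^ (k+1))
      = Polynomial.C (q.coeff k) * Polynomial.X ^ k := by
    intro k _
    rw [Polynomial.derivative_C_mul_X_pow]
    have h1 : q.coeff k / ((k : ℝ)+1) * ((k : ℝ)+1) = q.coeff k := by
      field_simp
    have h2 : ((k+1 : ℕ) : ℝ) = (k : ℝ) + 1 := by push_cast; ring
    rw [h2, h1]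
    simp
  rw [Finset.sum_congr rfl h]
  have hs := Polynomial.sum_def q (fun n a => Polynomial.C a * Polynomial.X ^ n)
  rw [← hs, Polynomial.sum_C_mul_X_pow_eq]

lemma exists_poly_approx {c L : ℝ} (hc : 0 < c) (hcL : c ≤ L) {ε : ℝ} (hε : 0 < ε) :
    ∃ p : Polynomial ℝ, (∀ x ∈ Set.Icc c L, |p.eval x - x * Real.log x| ≤ ε * (L - c)) ∧
      (∀ x ∈ Set.Icc c L, |(Polynomial.derivative p).eval x - (Real.log x + 1)| ≤ ε) := by
  have hsub : Set.Icc c L ⊆ {(0:ℝ)}ᶜ := by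
    intro x hx
    simp only [Set.mem_compl_iff, Set.mem_singleton_iff]
    exact ne_of_gt (lt_of_lt_of_le hc hx.1)
  have hcont : ContinuousOn (fun x : ℝ => Real.log x + 1) (Set.Icc c L) :=
    (Real.continuousOn_log.mono hsub).add continuousOn_const
  obtain ⟨q, hq⟩ := exists_polynomial_near_of_continuousOn c L _ hcont ε hε
  set P : Polynomial ℝ := pint q + Polynomial.C (c * Real.log c - (pint q).eval c) with hP
  have hder : Polynomial.derivative P = q := by
    rw [hP, Polynomial.derivative_add, Polynomial.derivative_C, add_zero, derivative_pint]
  have hPc : P.eval c = c * Real.log c := by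
    rw [hP]; simp
  have hderivs : ∀ y ∈ Set.Icc c L, HasDerivWithinAt
      (fun x => P.eval x - x * Real.log x)
      (q.eval y - (Real.log y + 1)) (Set.Icc c L) y := by
    intro y hy
    have hy0 : y ≠ 0 := ne_of_gt (lt_of_lt_of_le hc hy.1)
    have hxlog : HasDerivAt (fun x : ℝ => x * Real.log x) (Real.log y + 1) y := by
      have h := (hasDerivAt_id y).mul (Real.hasDerivAt_log hy0)
      exact h.congr_deriv (by simp [mul_inv_cancel₀ hy0])
    have hPd : HasDerivAt (fun x => P.eval x) (q.eval y) y := by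
      have := P.hasDerivAt y
      rwa [hder] at this
    exact (hPd.sub hxlog).hasDerivWithinAt
  have hbound : ∀ y ∈ Set.Icc c L, ‖q.eval y - (Real.log y + 1)‖ ≤ ε := by
    intro y hy
    exact (hq y hy).le
  refine ⟨P, ?_, ?_⟩
  · intro x hx
    have key := Convex.norm_image_sub_le_of_norm_hasDerivWithin_le hderivs hbound
      (convex_Icc c L) (Set.left_mem_Icc.mpr hcL) hx
    rw [hPc, sub_self] at key
    have hxc : ‖x - c‖ ≤ L - c := by
      rw [Real.norm_eq_abs, abs_of_nonneg (by linarith [hx.1])]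
      linarith [hx.2]
    calc |P.eval x - x * Real.log x| = ‖P.eval x - x * Real.log x - 0‖ := by
          rw [sub_zero, Real.norm_eq_abs]
      _ ≤ ε * ‖x - c‖ := key
      _ ≤ ε * (L - c) := by
          exact mul_le_mul_of_nonneg_left hxc hε.le
  · intro x hx
    rw [hder]
    exact (hq x hx).le


theorem main_integral [Nonempty n] {A B : Matrix n n ℂ} (hA : A.PosDef) (hB : B.PosDef) :
    ∫ s in (0:ℝ)..1, (((B - A) * mlog ((1 - s) • A + s • B)).trace).re
      = ((B * mlog B).trace).re - ((A * mlog A).trace).re - ((B - A).trace).re := by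
  classical
  obtain ⟨c, L, ε, hc, hε, hcL, heig⟩ := eigenvalues_comb_mem hA hB
  have hMs : ∀ s : ℝ, ((1 - s) • A + s • B).IsHermitian := fun s => isHermitian_comb hA.1 hB.1 s
  have heig' : ∀ s ∈ Set.Ioo (-ε) (1+ε), ∀ i : n,
      (hMs s).eigenvalues i ∈ Set.Icc c L := fun s hs i => heig s hs i
  have hmlog : ∀ s : ℝ, mlog ((1 - s) • A + s • B) = (hMs s).cfc Real.log := by
    intro s
    rw [mlog, dif_pos (hMs s)]
  have hprod : ∀ s : ℝ, ((1 - s) • A + s • B) * mlog ((1 - s) • A + s • B)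
      = (hMs s).cfc (fun x => x * Real.log x) := by
    intro s
    calc ((1 - s) • A + s • B) * mlog ((1 - s) • A + s • B)
        = (hMs s).cfc (fun x => x) * (hMs s).cfc Real.log := by
          rw [cfc_id (hMs s), hmlog s]
      _ = (hMs s).cfc (fun x => x * Real.log x) := cfc_mul (hMs s) _ _
  have hcfc1 : ∀ s : ℝ, (hMs s).cfc (fun x => Real.log x + 1)
      = mlog ((1 - s) • A + s • B) + 1 := by
    intro s
    have h : (hMs s).cfc Real.log + (hMs s).cfc (fun _ => 1)
        = (hMs s).cfc (fun x => Real.log x + 1) := cfc_add (hMs s) Real.log (fun _ => 1)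
    rw [← h, cfc_one (hMs s), hmlog s]
  have hex : ∀ k : ℕ, ∃ p : Polynomial ℝ,
      (∀ x ∈ Set.Icc c L, |p.eval x - x * Real.log x| ≤ (1/((k:ℝ)+1)) * (L - c)) ∧
      (∀ x ∈ Set.Icc c L, |(Polynomial.derivative p).eval x - (Real.log x + 1)| ≤ 1/((k:ℝ)+1)) :=
    fun k => exists_poly_approx hc hcL (by positivity)
  choose P hP1 hP2 using hex
  have hsub01 : Set.uIcc (0:ℝ) 1 ⊆ Set.Ioo (-ε) (1+ε) := by
    rw [Set.uIcc_of_le zero_le_one]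
    intro x hx
    exact ⟨by linarith [hx.1], by linarith [hx.2]⟩
  set SH : ℝ := ∑ a, ∑ b, ‖(B - A) a b‖ with hSH
  have hdiff : ∀ (k : ℕ), ∀ s ∈ Set.Ioo (-ε) (1+ε),
      |(((B - A) * (hMs s).cfc (fun x => Real.log x + 1)).trace).re
        - (((B - A) * (Polynomial.aeval ((1 - s) • A + s • B))
            (Polynomial.derivative (P k))).trace).re|
      ≤ (Fintype.card n : ℝ) * (SH * (1/((k:ℝ)+1))) := by
    intro k s hs
    rw [← cfc_polynomial (hMs s) (Polynomial.derivative (P k)), ← Complex.sub_re,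
      ← Matrix.trace_sub, ← Matrix.mul_sub, cfc_sub (hMs s)]
    refine abs_re_trace_mul_cfc_le (hMs s) (B - A) _ (fun i => ?_)
    have h := hP2 k ((hMs s).eigenvalues i) (heig' s hs i)
    calc |(fun x => Real.log x + 1 - (Polynomial.derivative (P k)).eval x)
            ((hMs s).eigenvalues i)|
        = |(Polynomial.derivative (P k)).eval ((hMs s).eigenvalues i)
            - (Real.log ((hMs s).eigenvalues i) + 1)| := by
          rw [← abs_neg]; congr 1; ring
      _ ≤ 1/((k:ℝ)+1) := h
  have hunif : TendstoUniformlyOn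
      (fun (k : ℕ) (s : ℝ) => (((B - A) * (Polynomial.aeval ((1 - s) • A + s • B))
          (Polynomial.derivative (P k))).trace).re)
      (fun s => (((B - A) * (hMs s).cfc (fun x => Real.log x + 1)).trace).re)
      Filter.atTop (Set.Ioo (-ε) (1+ε)) := by
    rw [Metric.tendstoUniformlyOn_iff]
    intro δ hδ
    have htend : Filter.Tendsto (fun k : ℕ => (Fintype.card n : ℝ) * (SH * (1/((k:ℝ)+1))))
        Filter.atTop (nhds 0) := by
      have h0 := tendsto_one_div_add_atTop_nhds_zero_nat (𝕜 := ℝ)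
      have h1 := h0.const_mul ((Fintype.card n : ℝ) * SH)
      simpa [mul_assoc] using h1
    have hev := htend.eventually_lt_const hδ
    filter_upwards [hev] with k hk s hs
    rw [Real.dist_eq]
    exact lt_of_le_of_lt (hdiff k s hs) hk
  have hpt : ∀ s ∈ Set.Ioo (-ε) (1+ε), Filter.Tendsto
      (fun k : ℕ => (((Polynomial.aeval ((1 - s) • A + s • B)) (P k)).trace).re)
      Filter.atTop
      (nhds ((((1 - s) • A + s • B) * mlog ((1 - s) • A + s • B)).trace).re) := by
    intro s hs
    have hbnd : ∀ k : ℕ,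
        ‖(((Polynomial.aeval ((1 - s) • A + s • B)) (P k)).trace).re
          - ((((1 - s) • A + s • B) * mlog ((1 - s) • A + s • B)).trace).re‖
        ≤ (Fintype.card n : ℝ) * ((1/((k:ℝ)+1)) * (L - c)) := by
      intro k
      rw [Real.norm_eq_abs, hprod s, ← cfc_polynomial (hMs s) (P k), re_trace_cfc, re_trace_cfc,
        ← Finset.sum_sub_distrib]
      refine (Finset.abs_sum_le_sum_abs _ _).trans ?_
      refine (Finset.sum_le_sum (fun i _ =>
        hP1 k ((hMs s).eigenvalues i) (heig' s hs i))).trans ?_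
      rw [Finset.sum_const, Finset.card_univ, nsmul_eq_mul]
    have h0 : Filter.Tendsto
        (fun k : ℕ => (Fintype.card n : ℝ) * ((1/((k:ℝ)+1)) * (L - c)))
        Filter.atTop (nhds 0) := by
      have h1 := tendsto_one_div_add_atTop_nhds_zero_nat (𝕜 := ℝ).const_mul ((Fintype.card n : ℝ))
      have h2 := h1.mul_const (L - c)
      simpa [mul_assoc] using h2
    have hz := squeeze_zero_norm hbnd h0
    have h2 := hz.add_const ((((1 - s) • A + s • B) * mlog ((1 - s) • A + s • B)).trace).re
    simpa using h2
  have hderivφ : ∀ s ∈ Set.uIcc (0:ℝ) 1, HasDerivAt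
      (fun s : ℝ => ((((1 - s) • A + s • B) * mlog ((1 - s) • A + s • B)).trace).re)
      ((((B - A) * mlog ((1 - s) • A + s • B)).trace).re + ((B - A).trace).re) s := by
    intro s hs
    have hptfun : ∀ x ∈ Set.Ioo (-ε) (1+ε), Filter.Tendsto
        (fun k : ℕ => (((Polynomial.aeval ((1 - x) • A + x • B)) (P k)).trace).re)
        Filter.atTop
        (nhds ((fun s : ℝ =>
          ((((1 - s) • A + s • B) * mlog ((1 - s) • A + s • B)).trace).re) x)) := hpt
    have hd := hasDerivAt_of_tendstoUniformlyOn isOpen_Ioo hunif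
      (Filter.Eventually.of_forall (fun k => fun x _ => hasDerivAt_trace_aeval A B (P k) x))
      hptfun (hsub01 hs)
    have heq : (((B - A) * (hMs s).cfc (fun x => Real.log x + 1)).trace).re
        = (((B - A) * mlog ((1 - s) • A + s • B)).trace).re + ((B - A).trace).re := by
      rw [hcfc1 s, Matrix.mul_add, mul_one, Matrix.trace_add, Complex.add_re]
    rw [← heq]
    exact hd
  have hcontg' : ContinuousOn
      (fun s => (((B - A) * (hMs s).cfc (fun x => Real.log x + 1)).trace).re)
      (Set.Ioo (-ε) (1+ε)) :=
    hunif.continuousOn (Filter.Eventually.of_forall fun k =>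
      (continuous_trace_mul_aeval A B (Polynomial.derivative (P k))).continuousOn).frequently
  have hconttarget : ContinuousOn
      (fun s => (((B - A) * mlog ((1 - s) • A + s • B)).trace).re + ((B - A).trace).re)
      (Set.uIcc (0:ℝ) 1) := by
    refine ContinuousOn.congr (hcontg'.mono hsub01) ?_
    intro s _
    show (((B - A) * mlog ((1 - s) • A + s • B)).trace).re + ((B - A).trace).re
        = (((B - A) * (hMs s).cfc (fun x => Real.log x + 1)).trace).re
    rw [hcfc1 s, Matrix.mul_add, mul_one, Matrix.trace_add, Complex.add_re]
  have hint : IntervalIntegrable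
      (fun s => (((B - A) * mlog ((1 - s) • A + s • B)).trace).re + ((B - A).trace).re)
      MeasureTheory.volume 0 1 := hconttarget.intervalIntegrable
  have hFTC := intervalIntegral.integral_eq_sub_of_hasDerivAt hderivφ hint
  have hgg : IntervalIntegrable
      (fun s => (((B - A) * mlog ((1 - s) • A + s • B)).trace).re)
      MeasureTheory.volume 0 1 := by
    have h := hint.sub (intervalIntegrable_const (c := ((B - A).trace).re))
    simpa using h
  rw [intervalIntegral.integral_add hgg (intervalIntegrable_const (c := ((B - A).trace).re))]
    at hFTC
  have h1 : (1 - (1:ℝ)) • A + (1:ℝ) • B = B := by simp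
  have h0 : (1 - (0:ℝ)) • A + (0:ℝ) • B = A := by simp
  simp only [intervalIntegral.integral_const, sub_zero, one_smul, smul_eq_mul, sub_self,
    zero_smul, zero_add, add_zero] at hFTC
  linarith [hFTC]

end RelEntAux

/-- Integral representation of the relative entropy along the linear path
`C(s) = (1-s)A + sB`. -/
theorem relEntropy_integral_rep {n : Type*} [Fintype n] [DecidableEq n]
    (A B : Matrix n n ℂ) (hA : A.PosDef) (hB : B.PosDef) :
    qRelEnt A B = ((A - B).trace).re + (((B - A) * mlog B).trace).re -
      ∫ s in (0 : ℝ)..1, (((B - A) * mlog ((1 - s) • A + s • B)).trace).re := by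
  rcases isEmpty_or_nonempty n with h | h
  · have h0 : ∀ X : Matrix n n ℂ, X.trace = 0 := fun X => by
      simp [Matrix.trace]
    simp [qRelEnt, h0]
  · rw [RelEntAux.main_integral hA hB]
    have e1 : (A * (mlog A - mlog B)).trace = (A * mlog A).trace - (A * mlog B).trace := by
      rw [Matrix.mul_sub, Matrix.trace_sub]
    have e2 : ((B - A) * mlog B).trace = (B * mlog B).trace - (A * mlog B).trace := by
      rw [Matrix.sub_mul, Matrix.trace_sub]
    have e3 : (A - B).trace = A.trace - B.trace := Matrix.trace_sub A B
    have e4 : (B - A).trace = B.trace - A.trace := Matrix.trace_sub B A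
    rw [qRelEnt, e1, e2, e3, e4]
    simp only [Complex.sub_re]
    ring
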